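/- In the deterministic 1-Naples simulation, if α ∈ {1,...,n}^n parks under the all-ones choice sequence β = (1,...,1) (i.e., α is a parking function), then α parks under every choice sequence β ∈ {0,1}^{n−1}. -/

import Mathlib

/-- The first spot in the list `l` not in `occ`, if any. -/
def firstFree (occ : Finset ℕ) (l : List ℕ) : Option ℕ :=
  l.find? (fun s => decide (s ∉ occ))

/-- Run a parking simulation: each car is a pair (preference, coin); `step`
decides where a car parks (or `none` if it fails). Returns `true` iff all cars park. -/
def runPark (step : Finset ℕ → ℕ → Bool → Option ℕ) :
    List (ℕ × Bool) → Finset ℕ → Bool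
  | [], _ => true
  | (a, b) :: rest, occ =>
    match step occ a b with
    | none => false
    | some s => runPark step rest (insert s occ)

/-- Run a parking simulation, returning the final set of occupied spots
(cars that fail to park simply do not park). -/
def runOcc (step : Finset ℕ → ℕ → Bool → Option ℕ) :
    List (ℕ × Bool) → Finset ℕ → Finset ℕ
  | [], occ => occ
  | (a, b) :: rest, occ =>
    match step occ a b with
    | none => runOcc step rest occ
    | some s => runOcc step rest (insert s occ)

/-- Random-direction step on spots `1,…,n`: if the preferred spot `a` is free, take it;
otherwise if the coin says forward, take the first free spot among `a+1,…,n`;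
otherwise take the first free spot among `a-1,…,1`. -/
def dirStep (n : ℕ) (occ : Finset ℕ) (a : ℕ) (fwd : Bool) : Option ℕ :=
  if a ∉ occ then some a
  else if fwd then firstFree occ (List.range' (a + 1) (n - a))
  else firstFree occ ((List.range' 1 (a - 1)).reverse)

/-- Random `k`-Naples step on spots `1,…,n`: if the preferred spot `a` is free, take it;
otherwise, if the coin says to back up, check spots `a-1, a-2, …, max(a-k,1)` one by one
taking the first free one; if none (or if the coin says not to back up), take the first
free spot among `a+1,…,n`. -/
def naplesStep (n k : ℕ) (occ : Finset ℕ) (a : ℕ) (back : Bool) : Option ℕ :=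
  if a ∉ occ then some a
  else
    let fwd := firstFree occ (List.range' (a + 1) (n - a))
    if back then
      match firstFree occ ((List.range' (max (a - k) 1) (min k (a - 1))).reverse) with
      | some s => some s
      | none => fwd
    else fwd

/-- Circular random-direction step on spots `1,…,n+1` arranged in a circle:
if the preferred spot `a` is free, take it; otherwise search clockwise
(`a+1, a+2, …` wrapping around) or counterclockwise according to the coin. -/
def circStep (n : ℕ) (occ : Finset ℕ) (a : ℕ) (cw : Bool) : Option ℕ :=
  if a ∉ occ then some a
  else if cw then
    firstFree occ (List.range' (a + 1) (n + 1 - a) ++ List.range' 1 (a - 1))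
  else
    firstFree occ ((List.range' 1 (a - 1)).reverse ++ (List.range' (a + 1) (n + 1 - a)).reverse)

/-- Whether all `n` cars with preferences `α` park in the random-direction model on spots
`1,…,n` with coins `b` (`b i = true` means car `i` searches forward when its spot is taken). -/
def parksDir (n : ℕ) (α : Fin n → ℕ) (b : Fin n → Bool) : Bool :=
  runPark (dirStep n) (List.ofFn (fun i => (α i, b i))) ∅

/-- Whether all `n` cars with preferences `α` park in the `k`-Naples model on spots `1,…,n`
with coins `b` (`b i = true` means car `i` backs up when its spot is taken). -/
def parksNaples (n k : ℕ) (α : Fin n → ℕ) (b : Fin n → Bool) : Bool :=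
  runPark (naplesStep n k) (List.ofFn (fun i => (α i, b i))) ∅

/-- The probability that all cars park in the random-direction model, where each car
whose spot is taken independently searches forward with probability `p` and backward
with probability `1 - p`. -/
noncomputable def probDir (n : ℕ) (p : ℝ) (α : Fin n → ℕ) : ℝ :=
  ∑ b : Fin n → Bool,
    (∏ i, if b i then p else 1 - p) * (if parksDir n α b then 1 else 0)

/-- The probability that all cars park in the random `k`-Naples model, where each car
whose spot is taken independently backs up (up to) `k` spots with probability `p`. -/
noncomputable def probNaples (n k : ℕ) (p : ℝ) (α : Fin n → ℕ) : ℝ :=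
  ∑ b : Fin n → Bool,
    (∏ i, if b i then p else 1 - p) * (if parksNaples n k α b then 1 else 0)

/-- The deterministic 1-Naples simulation for choices `β = (β₂,…,βₙ) ∈ {0,1}^{n-1}`:
car `i ≥ 2` backs up one spot first iff `β i = false` (i.e. `βᵢ = 0`); car 1's choice
is irrelevant since its preferred spot is always free. -/
def parksUnder (n : ℕ) (α : Fin n → ℕ) (β : Fin (n - 1) → Bool) : Bool :=
  parksNaples n 1 α
    (fun i => if h : 0 < i.1 then !(β ⟨i.1 - 1, by have := i.2; omega⟩) else false)

/-- `g α`: the number of choice sequences `β ∈ {0,1}^{n-1}` under which `α` parks in the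
deterministic 1-Naples simulation. -/
def g (n : ℕ) (α : Fin n → ℕ) : ℕ :=
  (Finset.univ.filter (fun β : Fin (n - 1) → Bool => parksUnder n α β = true)).card

/-- `α` is a parking function: every car parks when each car whose preferred spot is taken
only searches forward. -/
def forwardParks (n : ℕ) (α : Fin n → ℕ) : Bool :=
  parksNaples n 0 α (fun _ => false)

/-- `α` is a 1-Naples parking function: every car parks when each car whose preferred spot
is taken always backs up one spot first. -/
def naplesParks (n : ℕ) (α : Fin n → ℕ) : Bool :=
  parksNaples n 1 α (fun _ => true)

/-- The expected number of random `k`-Naples parking functions on `n` cars. -/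
noncomputable def T (k : ℕ) (p : ℝ) (n : ℕ) : ℝ :=
  ∑ α : Fin n → Fin n, probNaples n k p (fun i => (α i).1 + 1)

/-- The staircase preference list: `m t` copies of `t`, then `m (t-1)` copies of `t-1`,
…, down to `m 2` copies of `2`. -/
def stair (t : ℕ) (m : ℕ → ℕ) : List ℕ :=
  ((List.range' 2 (t - 1)).reverse).flatMap (fun j => List.replicate (m j) j)

/-- The staircase condition on a preference tuple: `α₁ = α₂`, each entry decreases by
`0` or `1`, and `αₙ = 2`. -/
def Staircase {n : ℕ} (hn : 2 ≤ n) (α : Fin n → ℕ) : Prop :=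
  α ⟨0, by omega⟩ = α ⟨1, by omega⟩ ∧
  (∀ i : ℕ, (h : i + 1 < n) →
    α ⟨i + 1, h⟩ = α ⟨i, by omega⟩ ∨ α ⟨i + 1, h⟩ + 1 = α ⟨i, by omega⟩) ∧
  α ⟨n - 1, by omega⟩ = 2

/-- The number of 1-Naples parking functions on `n` cars. -/
def Nnum (n : ℕ) : ℕ :=
  (Finset.univ.filter
    (fun α : Fin n → Fin n => naplesParks n (fun i => (α i).1 + 1) = true)).card
-- helper lemmas
lemma find?_range'_spec {p : ℕ → Bool} {st len s : ℕ}
    (h : (List.range' st len).find? p = some s) :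
    st ≤ s ∧ s < st + len ∧ p s = true ∧ ∀ x, st ≤ x → x < s → p x = false := by
  induction len generalizing st with
  | zero => simp at h
  | succ k ih =>
    rw [List.range'_succ] at h
    by_cases hp : p st
    · rw [List.find?_cons_of_pos hp] at h
      obtain rfl : st = s := by injection h
      exact ⟨le_refl _, by omega, hp, fun x h1 h2 => by omega⟩
    · rw [List.find?_cons_of_neg (by simpa using hp)] at h
      obtain ⟨h1, h2, h3, h4⟩ := ih h
      refine ⟨by omega, by omega, h3, fun x hx1 hx2 => ?_⟩
      rcases eq_or_lt_of_le hx1 with rfl | hlt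
      · simpa using hp
      · exact h4 x hlt hx2

lemma find?_isSome {p : ℕ → Bool} {l : List ℕ} {x : ℕ} (hx : x ∈ l) (hp : p x = true) :
    ∃ s, l.find? p = some s := by
  cases hfind : l.find? p with
  | none => exact absurd hp (by simpa using List.find?_eq_none.1 hfind x hx)
  | some s => exact ⟨s, rfl⟩

def cnt (occ : Finset ℕ) (m : ℕ) : ℕ := (occ.filter (fun x => m ≤ x)).card

lemma cnt_insert {s : ℕ} {occ : Finset ℕ} (h : s ∉ occ) (m : ℕ) :
    cnt (insert s occ) m = cnt occ m + if m ≤ s then 1 else 0 := by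
  unfold cnt
  rw [Finset.filter_insert]
  by_cases hm : m ≤ s
  · rw [if_pos hm, if_pos hm, Finset.card_insert_of_notMem (fun hc => h (Finset.mem_filter.1 hc).1)]
  · rw [if_neg hm, if_neg hm, Nat.add_zero]

lemma cnt_le_of_free {n a s : ℕ} {occ : Finset ℕ} (hocc : occ ⊆ Finset.Icc 1 n)
    (hs : s ∉ occ) (hs1 : a ≤ s) (hs2 : s ≤ n) : cnt occ a ≤ n - a := by
  have hsub : occ.filter (fun x => a ≤ x) ⊆ (Finset.Icc a n).erase s := by
    intro x hx
    simp only [Finset.mem_filter] at hx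
    have := hocc hx.1
    simp only [Finset.mem_Icc] at this
    simp only [Finset.mem_erase, Finset.mem_Icc]
    exact ⟨fun h => hs (h ▸ hx.1), hx.2, this.2⟩
  calc cnt occ a ≤ ((Finset.Icc a n).erase s).card := Finset.card_le_card hsub
    _ = (Finset.Icc a n).card - 1 := Finset.card_erase_of_mem (by simp only [Finset.mem_Icc]; exact ⟨hs1, hs2⟩)
    _ ≤ n - a := by rw [Nat.card_Icc]; omega

lemma exists_free {n a : ℕ} {occ : Finset ℕ} (_hocc : occ ⊆ Finset.Icc 1 n)
    (h : cnt occ a ≤ n - a) (han : a ≤ n) : ∃ x, a ≤ x ∧ x ≤ n ∧ x ∉ occ := by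
  by_contra hc
  push_neg at hc
  have hsub : Finset.Icc a n ⊆ occ.filter (fun x => a ≤ x) := by
    intro x hx
    simp only [Finset.mem_Icc] at hx
    exact Finset.mem_filter.2 ⟨hc x hx.1 hx.2, hx.1⟩
  have := Finset.card_le_card hsub
  rw [Nat.card_Icc] at this
  unfold cnt at h
  omega

lemma cnt_split {a m : ℕ} (occ : Finset ℕ) (ham : a ≤ m) :
    cnt occ a = cnt occ m + (occ.filter (fun x => a ≤ x ∧ x < m)).card := by
  unfold cnt
  rw [← Finset.card_union_of_disjoint]
  · congr 1
    ext x
    simp only [Finset.mem_union, Finset.mem_filter]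
    constructor
    · rintro ⟨hx, hax⟩
      by_cases hxm : m ≤ x
      · exact Or.inl ⟨hx, hxm⟩
      · exact Or.inr ⟨hx, hax, by omega⟩
    · rintro (⟨hx, hmx⟩ | ⟨hx, hax, _⟩)
      · exact ⟨hx, by omega⟩
      · exact ⟨hx, hax⟩
  · rw [Finset.disjoint_filter]
    intro x _ hmx
    simp; omega

lemma key_ineq {occ occ' : Finset ℕ} {a m s s' : ℕ}
    (hcnt : ∀ m, cnt occ' m ≤ cnt occ m)
    (has : a ≤ s) (hss : s < m) (hms' : m ≤ s')
    (hsub' : ∀ x, a ≤ x → x < s' → x ∈ occ') (hs : s ∉ occ) :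
    cnt occ' m + 1 ≤ cnt occ m := by
  have h1 : (occ'.filter (fun x => a ≤ x ∧ x < m)).card = m - a := by
    have : occ'.filter (fun x => a ≤ x ∧ x < m) = Finset.Ico a m := by
      ext x
      simp only [Finset.mem_filter, Finset.mem_Ico]
      exact ⟨fun h => h.2, fun h => ⟨hsub' x h.1 (by omega), h⟩⟩
    rw [this, Nat.card_Ico]
  have h2 : (occ.filter (fun x => a ≤ x ∧ x < m)).card ≤ m - a - 1 := by
    have hsub : occ.filter (fun x => a ≤ x ∧ x < m) ⊆ (Finset.Ico a m).erase s := by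
      intro x hx
      simp only [Finset.mem_filter] at hx
      simp only [Finset.mem_erase, Finset.mem_Ico]
      exact ⟨fun h => hs (h ▸ hx.1), hx.2⟩
    calc _ ≤ ((Finset.Ico a m).erase s).card := Finset.card_le_card hsub
      _ = _ := Finset.card_erase_of_mem (by simp [Finset.mem_Ico]; omega)
      _ ≤ m - a - 1 := by rw [Nat.card_Ico]
  have e1 := cnt_split occ' (show a ≤ m by omega)
  have e2 := cnt_split occ (show a ≤ m by omega)
  have := hcnt a
  omega

def PInv (n : ℕ) (occ occ' : Finset ℕ) : Prop :=
  occ ⊆ Finset.Icc 1 n ∧ occ' ⊆ Finset.Icc 1 n ∧ occ'.card = occ.card ∧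
    ∀ m, cnt occ' m ≤ cnt occ m

lemma step_spec_fwd {n a s : ℕ} {occ : Finset ℕ} (han : a ≤ n)
    (hs : naplesStep n 1 occ a false = some s) :
    a ≤ s ∧ s ≤ n ∧ s ∉ occ ∧ ∀ x, a ≤ x → x < s → x ∈ occ := by
  unfold naplesStep at hs
  simp only [Bool.false_eq_true, if_false] at hs
  by_cases ha : a ∈ occ
  · rw [if_neg (by simpa using ha)] at hs
    obtain ⟨h1, h2, h3, h4⟩ := find?_range'_spec hs
    refine ⟨by omega, by omega, by simpa using h3, fun x hx1 hx2 => ?_⟩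
    rcases eq_or_lt_of_le hx1 with rfl | hlt
    · exact ha
    · have := h4 x (by omega) hx2
      simpa using this
  · rw [if_pos (by simpa using ha)] at hs
    obtain rfl : a = s := by injection hs
    exact ⟨le_refl _, by omega, ha, fun x h1 h2 => by omega⟩

lemma step_succeeds {n a : ℕ} {occ' : Finset ℕ} (b : Bool) (ha1 : 1 ≤ a) (han : a ≤ n)
    (hfree : ∃ x, a ≤ x ∧ x ≤ n ∧ x ∉ occ') :
    ∃ s', naplesStep n 1 occ' a b = some s' ∧ s' ∉ occ' ∧ s' ≤ n ∧ 1 ≤ s' ∧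
      (s' + 1 = a ∨ (a ≤ s' ∧ ∀ x, a ≤ x → x < s' → x ∈ occ')) := by
  by_cases ha : a ∈ occ'
  · obtain ⟨x, hx1, hx2, hx3⟩ := hfree
    have hxa : a + 1 ≤ x := by
      rcases eq_or_lt_of_le hx1 with rfl | h
      · exact absurd ha hx3
      · omega
    have hxmem : x ∈ List.range' (a + 1) (n - a) := by
      rw [List.mem_range'_1]; omega
    obtain ⟨t, ht⟩ := find?_isSome (p := fun s => decide (s ∉ occ')) hxmem (by simpa using hx3)
    obtain ⟨ht1, ht2, ht3, ht4⟩ := find?_range'_spec ht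
    have htspec : t ∉ occ' ∧ t ≤ n ∧ 1 ≤ t ∧
        (t + 1 = a ∨ (a ≤ t ∧ ∀ y, a ≤ y → y < t → y ∈ occ')) := by
      refine ⟨by simpa using ht3, by omega, by omega, Or.inr ⟨by omega, fun y hy1 hy2 => ?_⟩⟩
      rcases eq_or_lt_of_le hy1 with rfl | hlt
      · exact ha
      · simpa using ht4 y (by omega) hy2
    unfold naplesStep firstFree
    rw [if_neg (by simpa using ha)]
    cases b with
    | false =>
      refine ⟨t, ?_, htspec.1, htspec.2.1, htspec.2.2.1, htspec.2.2.2⟩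
      simpa [firstFree] using ht
    | true =>
      by_cases ha2 : 2 ≤ a
      · have hmax : max (a - 1) 1 = a - 1 := by omega
        have hmin : min 1 (a - 1) = 1 := by omega
        rw [hmax, hmin]
        have hlist : (List.range' (a - 1) 1).reverse = [a - 1] := by
          simp [List.range'_succ]
        rw [hlist]
        by_cases hb : a - 1 ∈ occ'
        · have : List.find? (fun s => decide (s ∉ occ')) [a - 1] = none := by
            simp [hb]
          rw [this]
          refine ⟨t, ?_, htspec.1, htspec.2.1, htspec.2.2.1, htspec.2.2.2⟩
          simpa [firstFree] using ht
        · have hfind : List.find? (fun s => decide (s ∉ occ')) [a - 1] = some (a - 1) := by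
            simp [hb]
          rw [hfind]
          exact ⟨a - 1, by simp, hb, by omega, by omega, Or.inl (by omega)⟩
      · have hmin : min 1 (a - 1) = 0 := by omega
        rw [hmin]
        simp only [List.range'_zero, List.reverse_nil, List.find?_nil]
        refine ⟨t, ?_, htspec.1, htspec.2.1, htspec.2.2.1, htspec.2.2.2⟩
        simpa [firstFree] using ht
  · refine ⟨a, ?_, ha, han, ha1, Or.inr ⟨le_refl _, fun x h1 h2 => by omega⟩⟩
    unfold naplesStep
    rw [if_pos (by simpa using ha)]

lemma step_main {n a : ℕ} (b : Bool) {occ occ' : Finset ℕ} {s : ℕ} (ha1 : 1 ≤ a) (han : a ≤ n)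
    (hI : PInv n occ occ') (hs : naplesStep n 1 occ a false = some s) :
    ∃ s', naplesStep n 1 occ' a b = some s' ∧ PInv n (insert s occ) (insert s' occ') := by
  obtain ⟨hocc, hocc', hcard, hcnt⟩ := hI
  obtain ⟨has, hsn, hsno, hsub⟩ := step_spec_fwd han hs
  have hcnta : cnt occ' a ≤ n - a := le_trans (hcnt a) (cnt_le_of_free hocc hsno has hsn)
  obtain ⟨s', hstep', hs'no, hs'n, hs'1, hcase⟩ :=
    step_succeeds b ha1 han (exists_free hocc' hcnta han)
  refine ⟨s', hstep', ?_, ?_, ?_, ?_⟩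
  · exact Finset.insert_subset (Finset.mem_Icc.2 ⟨by omega, hsn⟩) hocc
  · exact Finset.insert_subset (Finset.mem_Icc.2 ⟨hs'1, hs'n⟩) hocc'
  · rw [Finset.card_insert_of_notMem hsno, Finset.card_insert_of_notMem hs'no, hcard]
  · intro m
    rw [cnt_insert hsno, cnt_insert hs'no]
    have hm := hcnt m
    by_cases hm1 : m ≤ s'
    · by_cases hm2 : m ≤ s
      · simp only [if_pos hm1, if_pos hm2]; omega
      · rcases hcase with hc | ⟨hc1, hc2⟩
        · omega
        · have := key_ineq hcnt has (by omega) hm1 hc2 hsno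
          simp only [if_pos hm1]
          split <;> omega
    · simp only [if_neg hm1]
      split <;> omega

lemma run_main (n : ℕ) : ∀ (l l' : List (ℕ × Bool)), l.map Prod.fst = l'.map Prod.fst →
    (∀ p ∈ l, p.2 = false) → (∀ p ∈ l, 1 ≤ p.1 ∧ p.1 ≤ n) →
    ∀ occ occ', PInv n occ occ' →
    runPark (naplesStep n 1) l occ = true → runPark (naplesStep n 1) l' occ' = true := by
  intro l
  induction l with
  | nil =>
    intro l' hmap _ _ occ occ' _ _
    have : l' = [] := by
      cases l' with
      | nil => rfl
      | cons q t => simp at hmap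
    subst this
    rfl
  | cons p t ih =>
    intro l' hmap hfalse hrange occ occ' hI hrun
    cases l' with
    | nil => simp at hmap
    | cons q t' =>
      obtain ⟨a, bb⟩ := p
      obtain ⟨a', b'⟩ := q
      simp only [List.map_cons, List.cons.injEq] at hmap
      obtain ⟨rfl, hmap'⟩ := hmap
      have hbb : bb = false := hfalse _ List.mem_cons_self
      subst hbb
      have hr := hrange _ List.mem_cons_self
      simp only [runPark] at hrun ⊢
      cases hstep : naplesStep n 1 occ a false with
      | none => rw [hstep] at hrun; simp at hrun
      | some s =>
        rw [hstep] at hrun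
        obtain ⟨s', hstep', hI'⟩ := step_main b' hr.1 hr.2 hI hstep
        rw [hstep']
        exact ih t' hmap' (fun p hp => hfalse p (List.mem_cons_of_mem _ hp))
          (fun p hp => hrange p (List.mem_cons_of_mem _ hp)) _ _ hI' hrun


/-- If `α` parks under the all-ones choice sequence (i.e. `α` is a parking function),
then `α` parks under every choice sequence. -/
theorem stmt18 (n : ℕ) (α : Fin n → Fin n)
    (h : parksUnder n (fun i => (α i).1 + 1) (fun _ => true) = true) :
    ∀ β : Fin (n - 1) → Bool, parksUnder n (fun i => (α i).1 + 1) β = true := by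
  intro β
  unfold parksUnder parksNaples at h ⊢
  refine run_main n _ _ ?_ ?_ ?_ ∅ ∅ ?_ h
  · simp only [List.map_ofFn]
    congr 1
  · intro p hp
    rw [List.mem_ofFn] at hp
    obtain ⟨i, rfl⟩ := hp
    simp only
    split <;> simp
  · intro p hp
    rw [List.mem_ofFn] at hp
    obtain ⟨i, rfl⟩ := hp
    exact ⟨Nat.succ_le_succ (Nat.zero_le _), Nat.succ_le_of_lt (α i).2⟩
  · exact ⟨Finset.empty_subset _, Finset.empty_subset _, rfl, fun m => le_refl _⟩
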